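/- With the 3SAT-to-PPCFG construction, the following are equivalent: (1) the 3SAT instance (X, C) is satisfiable; (2) there exists a parameter setting p of Γ such that {c_i : c_i ∈ C} ⊆ L(Γ_p). -/

import Mathlib

/-- One rewriting step using some rule from the rule set `R`. -/
def CFProduces {T N : Type*} (R : Set (ContextFreeRule T N))
    (u v : List (Symbol T N)) : Prop :=
  ∃ r ∈ R, r.Rewrites u v

/-- Derivation: reflexive-transitive closure of single rewriting steps. -/
def CFDerives {T N : Type*} (R : Set (ContextFreeRule T N)) :
    List (Symbol T N) → List (Symbol T N) → Prop :=
  Relation.ReflTransGen (CFProduces R)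

/-- The language generated from start symbol `S` by the rules `R`. -/
def CFLanguage {T N : Type*} (R : Set (ContextFreeRule T N)) (S : N) :
    Set (List T) :=
  { w | CFDerives R [Symbol.nonterminal S] (w.map Symbol.terminal) }

/-- Nonterminals of the 3SAT grammar: `START`, the variable symbols `x i`, and
the truth-marked variable symbols `x_{i,T}` and `x_{i,F}`. -/
inductive SatNT (n : ℕ)
  | start
  | x (i : Fin n)
  | xT (i : Fin n)
  | xF (i : Fin n)

/-- The PPCFG `Γ_p` built from a 3SAT instance with `n` variables and `m`
clauses, where `pos c j` (resp. `neg c j`) means the literal `x j` (resp.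
`¬ x j`) occurs in clause `c`.  Terminals are the clause symbols.  Fixed
productions: `START → x 1 ⋯ x n`, `x i → ε` for all `i`, `x_{j,T} → c` whenever
`x j ∈ c`, and `x_{j,F} → c` whenever `¬ x j ∈ c`.  The parameter setting
`p : Fin n → Bool` chooses, in each group `(x i → x_{i,T}, x i → x_{i,F})`,
the first production iff `p i = true`. -/
def satRules {n m : ℕ} (pos neg : Fin m → Fin n → Bool) (p : Fin n → Bool) :
    Set (ContextFreeRule (Fin m) (SatNT n)) :=
  {⟨SatNT.start, List.ofFn fun i : Fin n => Symbol.nonterminal (SatNT.x i)⟩} ∪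
  { r | ∃ i : Fin n, r = ⟨SatNT.x i, []⟩ } ∪
  { r | ∃ i : Fin n,
      r = ⟨SatNT.x i, [Symbol.nonterminal (if p i then SatNT.xT i else SatNT.xF i)]⟩ } ∪
  { r | ∃ c : Fin m, ∃ j : Fin n, pos c j = true ∧ r = ⟨SatNT.xT j, [Symbol.terminal c]⟩ } ∪
  { r | ∃ c : Fin m, ∃ j : Fin n, neg c j = true ∧ r = ⟨SatNT.xF j, [Symbol.terminal c]⟩ }

/-- The 3SAT instance is satisfiable: some truth assignment makes every clause true. -/
def SatSatisfiable {n m : ℕ} (pos neg : Fin m → Fin n → Bool) : Prop :=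
  ∃ a : Fin n → Bool, ∀ c : Fin m, ∃ j : Fin n,
    (pos c j = true ∧ a j = true) ∨ (neg c j = true ∧ a j = false)

/-- Each clause contains at most three literals (it is a 3SAT instance). -/
def ThreeBounded {n m : ℕ} (pos neg : Fin m → Fin n → Bool) : Prop :=
  ∀ c : Fin m, (Finset.univ.filter fun j : Fin n => pos c j = true ∨ neg c j = true).card ≤ 3


section Aux

variable {T N : Type*} {R : Set (ContextFreeRule T N)}

lemma CFDerives.trans' {u v w : List (Symbol T N)}
    (h1 : CFDerives R u v) (h2 : CFDerives R v w) : CFDerives R u w :=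
  Relation.ReflTransGen.trans h1 h2

lemma cfDerives_single {u v : List (Symbol T N)} {r : ContextFreeRule T N}
    (hr : r ∈ R) (h : r.Rewrites u v) : CFDerives R u v :=
  Relation.ReflTransGen.single ⟨r, hr, h⟩

lemma CFDerives.append_left {u v : List (Symbol T N)}
    (h : CFDerives R u v) (w : List (Symbol T N)) : CFDerives R (w ++ u) (w ++ v) := by
  induction h with
  | refl => exact Relation.ReflTransGen.refl
  | tail _ hlast ih =>
    obtain ⟨r, hr, hw⟩ := hlast
    exact ih.tail ⟨r, hr, hw.append_left w⟩

lemma CFDerives.append_right {u v : List (Symbol T N)}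
    (h : CFDerives R u v) (w : List (Symbol T N)) : CFDerives R (u ++ w) (v ++ w) := by
  induction h with
  | refl => exact Relation.ReflTransGen.refl
  | tail _ hlast ih =>
    obtain ⟨r, hr, hw⟩ := hlast
    exact ih.tail ⟨r, hr, hw.append_right w⟩

end Aux

section SatAux

variable {n m : ℕ} {pos neg : Fin m → Fin n → Bool} {p : Fin n → Bool}

lemma mem_satRules_erase (i : Fin n) :
    (⟨SatNT.x i, []⟩ : ContextFreeRule (Fin m) (SatNT n)) ∈ satRules pos neg p :=
  Or.inl (Or.inl (Or.inl (Or.inr ⟨i, rfl⟩)))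

/-- A list of variable nonterminals can be fully erased. -/
lemma erase_all (l : List (Symbol (Fin m) (SatNT n)))
    (hl : ∀ s ∈ l, ∃ i, s = Symbol.nonterminal (SatNT.x i)) :
    CFDerives (satRules pos neg p) l [] := by
  induction l with
  | nil => exact Relation.ReflTransGen.refl
  | cons a t ih =>
    obtain ⟨i, rfl⟩ := hl a List.mem_cons_self
    have step : CFDerives (satRules pos neg p) (Symbol.nonterminal (SatNT.x i) :: t) t := by
      have := cfDerives_single (R := satRules pos neg p) (mem_satRules_erase i)
        (ContextFreeRule.Rewrites.head (r := ⟨SatNT.x i, []⟩) t)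
      simpa using this
    exact step.trans' (ih fun s hs => hl s (List.mem_cons_of_mem _ hs))

/-- From a list of variable nonterminals we can keep exactly one member. -/
lemma keep_one (l : List (Symbol (Fin m) (SatNT n)))
    (hl : ∀ s ∈ l, ∃ i, s = Symbol.nonterminal (SatNT.x i))
    {s : Symbol (Fin m) (SatNT n)} (hs : s ∈ l) :
    CFDerives (satRules pos neg p) l [s] := by
  induction l with
  | nil => exact absurd hs List.not_mem_nil
  | cons a t ih =>
    rcases List.mem_cons.mp hs with rfl | hst
    · have : CFDerives (satRules pos neg p) ([s] ++ t) ([s] ++ []) :=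
        (erase_all t fun x hx => hl x (List.mem_cons_of_mem _ hx)).append_left [s]
      simpa using this
    · obtain ⟨i, rfl⟩ := hl a List.mem_cons_self
      have step : CFDerives (satRules pos neg p) (Symbol.nonterminal (SatNT.x i) :: t) t := by
        have := cfDerives_single (R := satRules pos neg p) (mem_satRules_erase i)
          (ContextFreeRule.Rewrites.head (r := ⟨SatNT.x i, []⟩) t)
        simpa using this
      exact step.trans' (ih (fun x hx => hl x (List.mem_cons_of_mem _ hx)) hst)

/-- Goodness invariant on symbols. -/
def Good (pos neg : Fin m → Fin n → Bool) (p : Fin n → Bool) :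
    Symbol (Fin m) (SatNT n) → Prop
  | .terminal c => ∃ j : Fin n, (pos c j = true ∧ p j = true) ∨ (neg c j = true ∧ p j = false)
  | .nonterminal (SatNT.xT i) => p i = true
  | .nonterminal (SatNT.xF i) => p i = false
  | .nonterminal _ => True

lemma good_preserved {u v : List (Symbol (Fin m) (SatNT n))}
    (h : CFProduces (satRules pos neg p) u v)
    (hu : ∀ s ∈ u, Good pos neg p s) : ∀ s ∈ v, Good pos neg p s := by
  obtain ⟨r, hr, hw⟩ := h
  obtain ⟨x, y, hxy, rfl⟩ := hw.exists_parts
  subst hxy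
  intro s hs
  rcases List.mem_append.mp hs with hs' | hy
  · rcases List.mem_append.mp hs' with hx | hout
    · exact hu s (by simp [hx])
    · -- s is in the output of the rule
      have hin : Good pos neg p (Symbol.nonterminal r.input) := hu _ (by simp)
      rcases hr with (((h1 | h2) | h3) | h4) | h5
      · rcases h1 with rfl
        simp only [List.mem_ofFn] at hout
        obtain ⟨i, rfl⟩ := hout
        trivial
      · obtain ⟨i, rfl⟩ := h2
        simp at hout
      · obtain ⟨i, rfl⟩ := h3
        simp only [List.mem_singleton] at hout
        subst hout
        cases hpi : p i <;> simp [Good, hpi]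
      · obtain ⟨c, j, hpos, rfl⟩ := h4
        simp only [List.mem_singleton] at hout
        subst hout
        exact ⟨j, Or.inl ⟨hpos, hin⟩⟩
      · obtain ⟨c, j, hneg, rfl⟩ := h5
        simp only [List.mem_singleton] at hout
        subst hout
        exact ⟨j, Or.inr ⟨hneg, hin⟩⟩
  · exact hu s (by simp [hy])

lemma good_derives {u v : List (Symbol (Fin m) (SatNT n))}
    (h : CFDerives (satRules pos neg p) u v)
    (hu : ∀ s ∈ u, Good pos neg p s) : ∀ s ∈ v, Good pos neg p s := by
  induction h with
  | refl => exact hu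
  | tail _ hlast ih => exact good_preserved hlast ih

end SatAux

/-- The 3SAT instance is satisfiable if and only if there exists a parameter
setting `p` of `Γ` such that every (length-1) clause-symbol string belongs to
`L(Γ_p)`. -/
theorem sat_iff_ppcfg_setting {n m : ℕ} (pos neg : Fin m → Fin n → Bool)
    (h3 : ThreeBounded pos neg) :
    SatSatisfiable pos neg ↔
      ∃ p : Fin n → Bool, ∀ c : Fin m,
        [c] ∈ CFLanguage (satRules pos neg p) SatNT.start := by
  constructor
  · rintro ⟨a, ha⟩
    refine ⟨a, fun c => ?_⟩
    obtain ⟨j, hj⟩ := ha c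
    -- step 1: START ⇒ x_1 ... x_n
    have step1 : CFDerives (satRules pos neg a) [Symbol.nonterminal SatNT.start]
        (List.ofFn fun i : Fin n => Symbol.nonterminal (SatNT.x i)) := by
      have hmem : (⟨SatNT.start, List.ofFn fun i : Fin n => Symbol.nonterminal (SatNT.x i)⟩ :
          ContextFreeRule (Fin m) (SatNT n)) ∈ satRules pos neg a :=
        Or.inl (Or.inl (Or.inl (Or.inl rfl)))
      exact cfDerives_single hmem ContextFreeRule.Rewrites.input_output
    -- step 2: keep only x_j
    have step2 : CFDerives (satRules pos neg a)
        (List.ofFn fun i : Fin n => Symbol.nonterminal (SatNT.x i))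
        [Symbol.nonterminal (SatNT.x j)] := by
      refine keep_one _ (fun s hs => ?_) ?_
      · simp only [List.mem_ofFn] at hs
        obtain ⟨i, rfl⟩ := hs
        exact ⟨i, rfl⟩
      · simp [List.mem_ofFn]
    -- step 3: x_j ⇒ x_{j,T/F} ⇒ c
    have step3 : CFDerives (satRules pos neg a)
        [Symbol.nonterminal (SatNT.x j)] [Symbol.terminal c] := by
      rcases hj with ⟨hpos, haj⟩ | ⟨hneg, haj⟩
      · have s1 : CFDerives (satRules pos neg a)
            [Symbol.nonterminal (SatNT.x j)] [Symbol.nonterminal (SatNT.xT j)] := by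
          have hmem : (⟨SatNT.x j,
              [Symbol.nonterminal (if a j then SatNT.xT j else SatNT.xF j)]⟩ :
              ContextFreeRule (Fin m) (SatNT n)) ∈ satRules pos neg a :=
            Or.inl (Or.inl (Or.inr ⟨j, rfl⟩))
          have := cfDerives_single hmem
            (ContextFreeRule.Rewrites.input_output
              (r := ⟨SatNT.x j,
                [Symbol.nonterminal (if a j then SatNT.xT j else SatNT.xF j)]⟩))
          simpa [haj] using this
        have s2 : CFDerives (satRules pos neg a)
            [Symbol.nonterminal (SatNT.xT j)] [Symbol.terminal c] := by
          have hmem : (⟨SatNT.xT j, [Symbol.terminal c]⟩ :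
              ContextFreeRule (Fin m) (SatNT n)) ∈ satRules pos neg a :=
            Or.inl (Or.inr ⟨c, j, hpos, rfl⟩)
          exact cfDerives_single hmem ContextFreeRule.Rewrites.input_output
        exact s1.trans' s2
      · have s1 : CFDerives (satRules pos neg a)
            [Symbol.nonterminal (SatNT.x j)] [Symbol.nonterminal (SatNT.xF j)] := by
          have hmem : (⟨SatNT.x j,
              [Symbol.nonterminal (if a j then SatNT.xT j else SatNT.xF j)]⟩ :
              ContextFreeRule (Fin m) (SatNT n)) ∈ satRules pos neg a :=
            Or.inl (Or.inl (Or.inr ⟨j, rfl⟩))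
          have := cfDerives_single hmem
            (ContextFreeRule.Rewrites.input_output
              (r := ⟨SatNT.x j,
                [Symbol.nonterminal (if a j then SatNT.xT j else SatNT.xF j)]⟩))
          simpa [haj] using this
        have s2 : CFDerives (satRules pos neg a)
            [Symbol.nonterminal (SatNT.xF j)] [Symbol.terminal c] := by
          have hmem : (⟨SatNT.xF j, [Symbol.terminal c]⟩ :
              ContextFreeRule (Fin m) (SatNT n)) ∈ satRules pos neg a :=
            Or.inr ⟨c, j, hneg, rfl⟩
          exact cfDerives_single hmem ContextFreeRule.Rewrites.input_output
        exact s1.trans' s2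
    show CFDerives (satRules pos neg a) [Symbol.nonterminal SatNT.start]
        ([c].map Symbol.terminal)
    simpa using (step1.trans' step2).trans' step3
  · rintro ⟨p, hp⟩
    refine ⟨p, fun c => ?_⟩
    have hder := hp c
    have hgood := good_derives hder (fun s hs => by
      simp only [List.mem_singleton] at hs
      subst hs
      trivial)
    have := hgood (Symbol.terminal c) (by simp)
    exact this
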